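/- Let A : X → ℝ be Lipschitz with constant Lip(A), let μ ∈ P(Λ) be fixed, and assume each τ_λ is s-Lipschitz (uniformly in λ) and ∫_Λ e^{A(τ_λ(x))} dμ(λ) = 1 for all x. Define q_x by dq_x(λ) = e^{A(τ_λ(x))} dμ(λ). Then x ↦ q_x is Lipschitz from (X,d) to (P(Λ), d_MK) with constant diam(Λ) · e^{‖A‖_∞} · Lip(A) · s. -/

import Mathlib

open MeasureTheory

/-- The Monge–Kantorovich (Wasserstein-1) distance. -/
noncomputable def dMK {α : Type*} [MetricSpace α] [MeasurableSpace α]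
    (μ ν : Measure α) : ℝ :=
  ⨆ f : {f : α → ℝ // LipschitzWith 1 f}, (∫ z, f.1 z ∂μ - ∫ z, f.1 z ∂ν)

lemma exp_sub_exp_le_aux {a b M : ℝ} (ha : a ≤ M) (hb : b ≤ M) :
    |Real.exp a - Real.exp b| ≤ Real.exp M * |a - b| := by
  wlog hab : b ≤ a generalizing a b
  · rw [abs_sub_comm, abs_sub_comm a b]; exact this hb ha (le_of_not_ge hab)
  have h1 : Real.exp b ≤ Real.exp a := Real.exp_le_exp.2 hab
  rw [abs_of_nonneg (by linarith), abs_of_nonneg (by linarith)]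
  have h2 : Real.exp a - Real.exp b = Real.exp a * (1 - Real.exp (b - a)) := by
    rw [mul_sub, mul_one, ← Real.exp_add]; ring_nf
  have h3 : 1 - Real.exp (b - a) ≤ a - b := by linarith [Real.add_one_le_exp (b - a)]
  have hM : Real.exp a ≤ Real.exp M := Real.exp_le_exp.2 ha
  nlinarith [Real.exp_pos a]

lemma continuous_integrable_of_compact {α : Type*} [MetricSpace α] [CompactSpace α]
    [MeasurableSpace α] [BorelSpace α] {μ : Measure α} [IsFiniteMeasure μ]
    {f : α → ℝ} (hf : Continuous f) : Integrable f μ := by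
  have := hf.continuousOn.integrableOn_compact (K := Set.univ) isCompact_univ (μ := μ)
  rwa [IntegrableOn, Measure.restrict_univ] at this

/-- Thermodynamic-formalism example: if `A : X → ℝ` is `LA`-Lipschitz, `μ ∈ P(Λ)` is
fixed, each `τ_λ` is `s`-Lipschitz uniformly in `λ`, and
`∫_Λ e^{A(τ_λ(x))} dμ(λ) = 1` for all `x`, then the family
`dq_x(λ) = e^{A(τ_λ(x))} dμ(λ)` is Lipschitz from `X` to `(P(Λ), d_MK)` with constant
`diam(Λ) · e^{‖A‖_∞} · Lip(A) · s`. -/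
theorem gibbs_family_is_lipschitz
    {X Λ : Type*} [MetricSpace X] [CompactSpace X]
    [MetricSpace Λ] [CompactSpace Λ] [MeasurableSpace Λ] [BorelSpace Λ]
    (τ : Λ → X → X) (hτ : Continuous fun p : Λ × X => τ p.1 p.2)
    (s : ℝ) (hs : 0 < s)
    (hcontr : ∀ (lam : Λ) (x y : X), dist (τ lam x) (τ lam y) ≤ s * dist x y)
    (A : X → ℝ) (LA : ℝ) (hLA : 0 ≤ LA)
    (hA : ∀ x y : X, |A x - A y| ≤ LA * dist x y)
    (μ : Measure Λ) (hμ : IsProbabilityMeasure μ)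
    (hnorm : ∀ x : X, ∫ l, Real.exp (A (τ l x)) ∂μ = 1)
    (q : X → Measure Λ)
    (hq : q = fun x => μ.withDensity fun l => ENNReal.ofReal (Real.exp (A (τ l x)))) :
    ∀ x y : X,
      dMK (q x) (q y) ≤
        Metric.diam (Set.univ : Set Λ) * Real.exp (⨆ z : X, |A z|) * LA * s *
          dist x y := by
  subst hq
  intro x y
  have hΛne : Nonempty Λ := by
    by_contra h
    rw [not_nonempty_iff] at h
    have h1 := hμ.measure_univ
    rw [Set.univ_eq_empty_iff.2 h] at h1
    simp at h1
  obtain ⟨l₀⟩ := hΛne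
  have hAc : Continuous A := by
    refine LipschitzWith.continuous (K := ⟨LA, hLA⟩) ?_
    refine LipschitzWith.of_dist_le_mul fun a b => ?_
    rw [Real.dist_eq]; exact hA a b
  set S : ℝ := ⨆ z : X, |A z| with hSdef
  have hSbdd : BddAbove (Set.range fun z : X => |A z|) :=
    (isCompact_range hAc.abs).bddAbove
  have hS : ∀ z : X, |A z| ≤ S := fun z => le_ciSup hSbdd z
  set D : ℝ := Metric.diam (Set.univ : Set Λ) with hDdef
  have hD : ∀ l : Λ, dist l l₀ ≤ D := fun l =>
    Metric.dist_le_diam_of_mem isCompact_univ.isBounded trivial trivial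
  set C : ℝ := D * Real.exp S * LA * s * dist x y with hCdef
  have hC0 : 0 ≤ C := by
    refine mul_nonneg (mul_nonneg (mul_nonneg (mul_nonneg ?_ (Real.exp_pos S).le) hLA)
      hs.le) dist_nonneg
    exact Metric.diam_nonneg
  rw [dMK]
  refine Real.iSup_le ?_ hC0
  rintro ⟨g, hg⟩
  simp only
  have hcont : ∀ z : X, Continuous fun l : Λ => Real.exp (A (τ l z)) := fun z =>
    Real.continuous_exp.comp (hAc.comp (hτ.comp (continuous_id.prodMk continuous_const)))
  have key : ∀ z : X,
      ∫ l, g l ∂(μ.withDensity fun l => ENNReal.ofReal (Real.exp (A (τ l z))))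
        = ∫ l, Real.exp (A (τ l z)) * g l ∂μ := by
    intro z
    have heq : (fun l : Λ => ENNReal.ofReal (Real.exp (A (τ l z))))
        = fun l : Λ => ((Real.exp (A (τ l z))).toNNReal : ENNReal) := rfl
    have hm : Measurable fun l : Λ => (Real.exp (A (τ l z))).toNNReal :=
      (continuous_real_toNNReal.comp (hcont z)).measurable
    rw [heq, integral_withDensity_eq_integral_smul hm g]
    refine integral_congr_ae (Filter.Eventually.of_forall fun l => ?_)
    simp only [NNReal.smul_def, Real.coe_toNNReal _ (Real.exp_pos _).le, smul_eq_mul]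
  rw [key x, key y]
  have hgc : Continuous g := hg.continuous
  have hint : ∀ z : X, Integrable (fun l => Real.exp (A (τ l z)) * g l) μ := fun z =>
    continuous_integrable_of_compact ((hcont z).mul hgc)
  have hinte : ∀ z : X, Integrable (fun l => Real.exp (A (τ l z))) μ := fun z =>
    continuous_integrable_of_compact (hcont z)
  rw [← integral_sub (hint x) (hint y)]
  have hsub : (fun l => Real.exp (A (τ l x)) * g l - Real.exp (A (τ l y)) * g l)
      = fun l => (Real.exp (A (τ l x)) - Real.exp (A (τ l y))) * (g l - g l₀)
        + (Real.exp (A (τ l x)) - Real.exp (A (τ l y))) * g l₀ := by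
    funext l; ring
  rw [hsub]
  have hint1 : Integrable
      (fun l => (Real.exp (A (τ l x)) - Real.exp (A (τ l y))) * (g l - g l₀)) μ :=
    continuous_integrable_of_compact (((hcont x).sub (hcont y)).mul (hgc.sub continuous_const))
  have hint2 : Integrable
      (fun l => (Real.exp (A (τ l x)) - Real.exp (A (τ l y))) * g l₀) μ :=
    continuous_integrable_of_compact (((hcont x).sub (hcont y)).mul continuous_const)
  rw [integral_add hint1 hint2]
  have hzero : ∫ l, (Real.exp (A (τ l x)) - Real.exp (A (τ l y))) * g l₀ ∂μ = 0 := by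
    rw [integral_mul_const, integral_sub (hinte x) (hinte y), hnorm x, hnorm y]
    ring
  rw [hzero, add_zero]
  have hbound : ∀ l : Λ,
      ‖(Real.exp (A (τ l x)) - Real.exp (A (τ l y))) * (g l - g l₀)‖ ≤ C := by
    intro l
    rw [norm_mul, Real.norm_eq_abs, Real.norm_eq_abs]
    have h1 : |Real.exp (A (τ l x)) - Real.exp (A (τ l y))|
        ≤ Real.exp S * (LA * (s * dist x y)) := by
      have he := exp_sub_exp_le_aux
        (M := S) ((le_abs_self _).trans (hS (τ l x))) ((le_abs_self _).trans (hS (τ l y)))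
      refine he.trans ?_
      have h2 : |A (τ l x) - A (τ l y)| ≤ LA * (s * dist x y) := by
        refine (hA _ _).trans ?_
        exact mul_le_mul_of_nonneg_left (hcontr l x y) hLA
      exact mul_le_mul_of_nonneg_left h2 (Real.exp_pos S).le
    have h3 : |g l - g l₀| ≤ D := by
      have := hg.dist_le_mul l l₀
      rw [Real.dist_eq] at this
      simpa using this.trans (by simpa using hD l)
    calc |Real.exp (A (τ l x)) - Real.exp (A (τ l y))| * |g l - g l₀|
        ≤ (Real.exp S * (LA * (s * dist x y))) * D := by
          exact mul_le_mul h1 h3 (abs_nonneg _) (by positivity)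
      _ = C := by rw [hCdef]; ring
  have := norm_integral_le_of_norm_le_const (μ := μ)
    (f := fun l => (Real.exp (A (τ l x)) - Real.exp (A (τ l y))) * (g l - g l₀))
    (C := C) (Filter.Eventually.of_forall hbound)
  rw [probReal_univ] at this
  simp only [ENNReal.toReal_one, mul_one, Real.norm_eq_abs] at this
  exact (le_abs_self _).trans this
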